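/- There exists a dichotomous hedonic game with 3 agents such that no partition reachable from the singleton partition by a finite sequence of IS deviations is individually stable; hence the dynamics of IS deviations starting from the singleton partition can never reach an individually stable partition, whatever the chosen path of deviations (even though the game itself admits an individually stable partition, namely the grand coalition). -/
import Mathlib

set_option maxRecDepth 100000
set_option maxHeartbeats 2000000


/-- A partition of the agent set `A`, encoded by the map sending each agent to
the coalition containing it. -/
def IsPartition {A : Type*} [DecidableEq A] (π : A → Finset A) : Prop :=
  (∀ i, i ∈ π i) ∧ ∀ i j, i ∈ π j → π i = π j

/-- Strict part of a weak preference relation `r`. -/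
def StrictPref {α : Type*} (r : α → α → Prop) (x y : α) : Prop :=
  r x y ∧ ¬ r y x

/-- `π'` is obtained from `π` by an IS deviation of agent `i`, where
`wp j C D` means that agent `j` weakly prefers coalition `C` to coalition `D`. -/
def IsISDeviation {A : Type*} [DecidableEq A]
    (wp : A → Finset A → Finset A → Prop) (π π' : A → Finset A) (i : A) : Prop :=
  π' i ≠ π i ∧
  (∀ j, j ≠ i → (π' j).erase i = (π j).erase i) ∧
  StrictPref (wp i) (π' i) (π i) ∧
  ∀ j ∈ (π' i).erase i, wp j (π' j) (π j)

/-- One step of the dynamics of IS deviations between partitions. -/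
def ISStep {A : Type*} [DecidableEq A]
    (wp : A → Finset A → Finset A → Prop) (π π' : A → Finset A) : Prop :=
  IsPartition π ∧ IsPartition π' ∧ ∃ i, IsISDeviation wp π π' i

/-- A partition is individually stable if no IS deviation from it is possible. -/
def IndividuallyStable {A : Type*} [DecidableEq A]
    (wp : A → Finset A → Finset A → Prop) (π : A → Finset A) : Prop :=
  IsPartition π ∧ ∀ π' : A → Finset A, ¬ ISStep wp π π'

/-- `r` is a weak order (total preorder) on the set `S`. -/
def WeakOrderOn {α : Type*} (r : α → α → Prop) (S : Set α) : Prop :=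
  (∀ x ∈ S, ∀ y ∈ S, r x y ∨ r y x) ∧
  ∀ x ∈ S, ∀ y ∈ S, ∀ z ∈ S, r x y → r y z → r x z

/-- `r` is antisymmetric on `S`, i.e. the preferences are strict. -/
def StrictPrefsOn {α : Type*} (r : α → α → Prop) (S : Set α) : Prop :=
  ∀ x ∈ S, ∀ y ∈ S, r x y → r y x → x = y

/-- `r` is (naturally) single-peaked on `S` with respect to the natural linear
order of `α`: whenever `y` lies strictly between `x` and `z`, `x ≻ y` implies `y ≿ z`. -/
def SinglePeakedOn {α : Type*} [LinearOrder α] (r : α → α → Prop) (S : Set α) : Prop :=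
  ∀ x ∈ S, ∀ y ∈ S, ∀ z ∈ S,
    ((x < y ∧ y < z) ∨ (z < y ∧ y < x)) → StrictPref r x y → r y z



instance {α : Type*} (r : α → α → Prop) [DecidableRel r] (x y : α) :
    Decidable (StrictPref r x y) := by unfold StrictPref; infer_instance

instance {A : Type*} [DecidableEq A] [Fintype A] (π : A → Finset A) :
    Decidable (IsPartition π) := by unfold IsPartition; infer_instance

instance {A : Type*} [DecidableEq A] [Fintype A]
    (wp : A → Finset A → Finset A → Prop) [∀ i, DecidableRel (wp i)]
    (π π' : A → Finset A) (i : A) : Decidable (IsISDeviation wp π π' i) := by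
  unfold IsISDeviation; infer_instance

instance {A : Type*} [DecidableEq A] [Fintype A]
    (wp : A → Finset A → Finset A → Prop) [∀ i, DecidableRel (wp i)]
    (π π' : A → Finset A) : Decidable (ISStep wp π π') := by
  unfold ISStep; infer_instance

instance {A : Type*} [DecidableEq A] [Fintype A]
    (wp : A → Finset A → Finset A → Prop) [∀ i, DecidableRel (wp i)]
    (π : A → Finset A) : Decidable (IndividuallyStable wp π) := by
  unfold IndividuallyStable; infer_instance

/-- The valuation of the counterexample game: agent 0 likes `{0,1}`,
agent 1 likes `{1,2}`, agent 2 likes `{0,2}`, everything else has value 0. -/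
def v3 : Fin 3 → Finset (Fin 3) → ℕ := fun i C =>
  if (i = 0 ∧ C = {0, 1}) ∨ (i = 1 ∧ C = {1, 2}) ∨ (i = 2 ∧ C = {0, 2}) then 1 else 0

@[reducible] def wp3 : Fin 3 → Finset (Fin 3) → Finset (Fin 3) → Prop :=
  fun i C D => v3 i D ≤ v3 i C

def Svec3 : Fin 3 → Finset (Fin 3) := fun a => {a}
def Q01 : Fin 3 → Finset (Fin 3) := fun a => if a = 2 then {2} else {0, 1}
def Q12 : Fin 3 → Finset (Fin 3) := fun a => if a = 0 then {0} else {1, 2}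
def Q20 : Fin 3 → Finset (Fin 3) := fun a => if a = 1 then {1} else {0, 2}

/-- The set of partitions reachable from the singleton partition. -/
def R3 (π : Fin 3 → Finset (Fin 3)) : Prop :=
  π = Svec3 ∨ π = Q01 ∨ π = Q12 ∨ π = Q20

instance : DecidablePred R3 := fun _ => by unfold R3; infer_instance

lemma closed_S : ∀ π', ISStep wp3 Svec3 π' → R3 π' := by decide
lemma closed_Q01 : ∀ π', ISStep wp3 Q01 π' → R3 π' := by decide
lemma closed_Q12 : ∀ π', ISStep wp3 Q12 π' → R3 π' := by decide
lemma closed_Q20 : ∀ π', ISStep wp3 Q20 π' → R3 π' := by decide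

lemma R3_closed : ∀ π π', R3 π → ISStep wp3 π π' → R3 π' := by
  intro π π' hπ h
  rcases hπ with h1 | h1 | h1 | h1 <;> subst h1
  · exact closed_S π' h
  · exact closed_Q01 π' h
  · exact closed_Q12 π' h
  · exact closed_Q20 π' h

lemma R3_notIS : ∀ π, R3 π → ¬ IndividuallyStable wp3 π := by
  intro π hπ
  rcases hπ with h1 | h1 | h1 | h1 <;> subst h1 <;> decide

/-- There exists a dichotomous hedonic game with 3 agents such that no partition
reachable from the singleton partition by IS deviations is individually stable,
even though the grand coalition is an individually stable partition. -/
theorem dhg_3_never_reach_IS_from_singletons :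
    ∃ v : Fin 3 → Finset (Fin 3) → ℕ,
      (∀ i C, v i C ≤ 1) ∧
      (∀ (m : ℕ) (seq : ℕ → Fin 3 → Finset (Fin 3)),
        seq 0 = (fun a => {a}) →
        (∀ k < m, ISStep (fun i C D => v i D ≤ v i C) (seq k) (seq (k + 1))) →
        ¬ IndividuallyStable (fun i C D => v i D ≤ v i C) (seq m)) ∧
      IndividuallyStable (fun i C D => v i D ≤ v i C)
        (fun _ => Finset.univ) := by
  refine ⟨v3, by decide, ?_, by decide⟩
  intro m seq h0 hstep
  have hinv : ∀ k, k ≤ m → R3 (seq k) := by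
    intro k
    induction k with
    | zero => intro _; rw [h0]; left; rfl
    | succ n ih =>
      intro hk
      exact R3_closed (seq n) (seq (n + 1)) (ih (by omega)) (hstep n (by omega))
  exact R3_notIS (seq m) (hinv m le_rfl)
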